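/- Let n ≥ 2 be an integer and δ = 1/(2n). Let b : ℝ → ℝ be given by b(x) = 1 if x > 0 and b(x) = 0 if x ≤ 0. Define X : ℝ → ℝ by: X(x) = x if x ∈ [k/n, (2k+1)/(2n)] or x ∈ [−(2k+1)/(2n), −k/n] for some integer 1 ≤ k ≤ n−1; X(x) = −x if x ∈ [(2k+1)/(2n), (k+1)/n] or x ∈ [−(k+1)/n, −(2k+1)/(2n)] for some integer 1 ≤ k ≤ n−1; and X(x) = x otherwise. Then X preserves Lebesgue measure, and there exists a universal constant c > 0 (independent of n) such that ∫_{−1}^{1} |b(X(x)) − b(X(x+δ))| / (δ + |X(x) − X(x+δ)|) dx ≥ c·log n. -/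

import Mathlib

open MeasureTheory Set
open scoped Classical

/-- The Heaviside field `b(x) = 1` if `x > 0`, `b(x) = 0` if `x ≤ 0`. -/
noncomputable def bstep : ℝ → ℝ := fun x => if 0 < x then 1 else 0

/-- The measure-preserving map of Statement 7, swapping the intervals
`[(2k+1)/(2n), (k+1)/n]` with their mirror images, `1 ≤ k ≤ n-1`. -/
noncomputable def Xmap (n : ℕ) : ℝ → ℝ := fun x =>
  if ∃ k : ℕ, 1 ≤ k ∧ k ≤ n - 1 ∧
      (((k : ℝ) / n ≤ x ∧ x ≤ (2 * k + 1) / (2 * n)) ∨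
        (-((2 * (k : ℝ) + 1) / (2 * n)) ≤ x ∧ x ≤ -((k : ℝ) / n))) then x
  else if ∃ k : ℕ, 1 ≤ k ∧ k ≤ n - 1 ∧
      (((2 * (k : ℝ) + 1) / (2 * n) ≤ x ∧ x ≤ ((k : ℝ) + 1) / n) ∨
        (-(((k : ℝ) + 1) / n) ≤ x ∧ x ≤ -((2 * (k : ℝ) + 1) / (2 * n)))) then -x
  else x

namespace Stmt7Aux

def cond1 (n : ℕ) (x : ℝ) : Prop :=
  ∃ k : ℕ, 1 ≤ k ∧ k ≤ n - 1 ∧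
      (((k : ℝ) / n ≤ x ∧ x ≤ (2 * k + 1) / (2 * n)) ∨
        (-((2 * (k : ℝ) + 1) / (2 * n)) ≤ x ∧ x ≤ -((k : ℝ) / n)))

def cond2 (n : ℕ) (x : ℝ) : Prop :=
  ∃ k : ℕ, 1 ≤ k ∧ k ≤ n - 1 ∧
      (((2 * (k : ℝ) + 1) / (2 * n) ≤ x ∧ x ≤ ((k : ℝ) + 1) / n) ∨
        (-(((k : ℝ) + 1) / n) ≤ x ∧ x ≤ -((2 * (k : ℝ) + 1) / (2 * n))))

lemma Xmap_def (n : ℕ) (x : ℝ) :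
    Xmap n x = if cond1 n x then x else if cond2 n x then -x else x := rfl

def flipSet (n : ℕ) : Set ℝ := {x | ¬ cond1 n x ∧ cond2 n x}

lemma Xmap_eq_ite (n : ℕ) (x : ℝ) :
    Xmap n x = if x ∈ flipSet n then -x else x := by
  rw [Xmap_def]
  by_cases h1 : cond1 n x
  · simp [h1, flipSet]
  · by_cases h2 : cond2 n x <;> simp [h1, h2, flipSet]

lemma cond1_neg (n : ℕ) (x : ℝ) : cond1 n (-x) ↔ cond1 n x := by
  constructor
  · rintro ⟨k, hk1, hk2, ⟨ha, hb⟩ | ⟨ha, hb⟩⟩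
    · exact ⟨k, hk1, hk2, Or.inr ⟨by linarith, by linarith⟩⟩
    · exact ⟨k, hk1, hk2, Or.inl ⟨by linarith, by linarith⟩⟩
  · rintro ⟨k, hk1, hk2, ⟨ha, hb⟩ | ⟨ha, hb⟩⟩
    · exact ⟨k, hk1, hk2, Or.inr ⟨by linarith, by linarith⟩⟩
    · exact ⟨k, hk1, hk2, Or.inl ⟨by linarith, by linarith⟩⟩

lemma cond2_neg (n : ℕ) (x : ℝ) : cond2 n (-x) ↔ cond2 n x := by
  constructor
  · rintro ⟨k, hk1, hk2, ⟨ha, hb⟩ | ⟨ha, hb⟩⟩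
    · exact ⟨k, hk1, hk2, Or.inr ⟨by linarith, by linarith⟩⟩
    · exact ⟨k, hk1, hk2, Or.inl ⟨by linarith, by linarith⟩⟩
  · rintro ⟨k, hk1, hk2, ⟨ha, hb⟩ | ⟨ha, hb⟩⟩
    · exact ⟨k, hk1, hk2, Or.inr ⟨by linarith, by linarith⟩⟩
    · exact ⟨k, hk1, hk2, Or.inl ⟨by linarith, by linarith⟩⟩

lemma flipSet_neg (n : ℕ) : Neg.neg ⁻¹' flipSet n = flipSet n := by
  ext x
  simp only [mem_preimage, flipSet, mem_setOf_eq, cond1_neg, cond2_neg]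

lemma measurableSet_cond1 (n : ℕ) : MeasurableSet {x : ℝ | cond1 n x} := by
  have h : {x : ℝ | cond1 n x} = ⋃ k : ℕ, {x : ℝ | 1 ≤ k ∧ k ≤ n - 1 ∧
      (((k : ℝ) / n ≤ x ∧ x ≤ (2 * k + 1) / (2 * n)) ∨
        (-((2 * (k : ℝ) + 1) / (2 * n)) ≤ x ∧ x ≤ -((k : ℝ) / n)))} := by
    ext x; simp [cond1]
  rw [h]
  refine MeasurableSet.iUnion fun k => ?_
  by_cases hk : 1 ≤ k ∧ k ≤ n - 1
  · convert (measurableSet_Icc.union measurableSet_Icc : MeasurableSet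
      (Icc ((k : ℝ) / n) ((2 * k + 1) / (2 * n)) ∪
        Icc (-((2 * (k : ℝ) + 1) / (2 * n))) (-((k : ℝ) / n)))) using 1
    ext x; simp [hk.1, hk.2, Set.mem_Icc]
  · convert MeasurableSet.empty (α := ℝ) using 1
    ext x; simp only [mem_setOf_eq, mem_empty_iff_false, iff_false]
    tauto

lemma measurableSet_cond2 (n : ℕ) : MeasurableSet {x : ℝ | cond2 n x} := by
  have h : {x : ℝ | cond2 n x} = ⋃ k : ℕ, {x : ℝ | 1 ≤ k ∧ k ≤ n - 1 ∧
      (((2 * (k : ℝ) + 1) / (2 * n) ≤ x ∧ x ≤ ((k : ℝ) + 1) / n) ∨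
        (-(((k : ℝ) + 1) / n) ≤ x ∧ x ≤ -((2 * (k : ℝ) + 1) / (2 * n))))} := by
    ext x; simp [cond2]
  rw [h]
  refine MeasurableSet.iUnion fun k => ?_
  by_cases hk : 1 ≤ k ∧ k ≤ n - 1
  · convert (measurableSet_Icc.union measurableSet_Icc : MeasurableSet
      (Icc ((2 * (k : ℝ) + 1) / (2 * n)) (((k : ℝ) + 1) / n) ∪
        Icc (-(((k : ℝ) + 1) / n)) (-((2 * (k : ℝ) + 1) / (2 * n))))) using 1
    ext x; simp [hk.1, hk.2, Set.mem_Icc]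
  · convert MeasurableSet.empty (α := ℝ) using 1
    ext x; simp only [mem_setOf_eq, mem_empty_iff_false, iff_false]
    tauto

lemma measurableSet_flipSet (n : ℕ) : MeasurableSet (flipSet n) := by
  have : flipSet n = {x : ℝ | cond2 n x} \ {x : ℝ | cond1 n x} := by
    ext x; simp [flipSet, and_comm]
  rw [this]
  exact (measurableSet_cond2 n).diff (measurableSet_cond1 n)

lemma measurable_Xmap (n : ℕ) : Measurable (Xmap n) := by
  have : Xmap n = fun x => if x ∈ flipSet n then -x else x :=
    funext (Xmap_eq_ite n)
  rw [this]
  exact Measurable.ite (measurableSet_flipSet n) measurable_neg measurable_id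

lemma measurePreserving_Xmap (n : ℕ) : MeasurePreserving (Xmap n) volume volume := by
  refine ⟨measurable_Xmap n, ?_⟩
  ext s hs
  rw [Measure.map_apply (measurable_Xmap n) hs]
  have hdecomp : Xmap n ⁻¹' s = (flipSet n ∩ Neg.neg ⁻¹' s) ∪ ((flipSet n)ᶜ ∩ s) := by
    ext x
    by_cases hx : x ∈ flipSet n <;>
      simp [Xmap_eq_ite, hx]
  rw [hdecomp]
  have hA := measurableSet_flipSet n
  have hd : Disjoint (flipSet n ∩ Neg.neg ⁻¹' s) ((flipSet n)ᶜ ∩ s) :=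
    Disjoint.mono inter_subset_left inter_subset_left disjoint_compl_right
  rw [measure_union hd (hA.compl.inter hs)]
  have h1 : flipSet n ∩ Neg.neg ⁻¹' s = Neg.neg ⁻¹' (flipSet n ∩ s) := by
    rw [preimage_inter, flipSet_neg]
  have h2 : volume (flipSet n ∩ Neg.neg ⁻¹' s) = volume (flipSet n ∩ s) := by
    rw [h1]
    exact (Measure.measurePreserving_neg (volume : Measure ℝ)).measure_preimage
      (hA.inter hs).nullMeasurableSet
  rw [h2]
  have := measure_inter_add_diff (μ := (volume : Measure ℝ)) s hA
  rw [inter_comm]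
  rw [show (flipSet n)ᶜ ∩ s = s \ flipSet n by rw [diff_eq, inter_comm]]
  exact this

lemma sum_log (m : ℕ) :
    Real.log (m + 2) - Real.log 2 ≤ ∑ k ∈ Finset.Icc 1 m, 1 / ((k : ℝ) + 1) := by
  induction m with
  | zero => simp
  | succ m ih =>
    rw [Finset.sum_Icc_succ_top (by omega : 1 ≤ m + 1)]
    have h2 : Real.log (((m : ℝ) + 3) / ((m : ℝ) + 2)) ≤ ((m : ℝ) + 3) / ((m : ℝ) + 2) - 1 :=
      Real.log_le_sub_one_of_pos (by positivity)
    rw [Real.log_div (by positivity) (by positivity)] at h2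
    have h3 : ((m : ℝ) + 3) / ((m : ℝ) + 2) - 1 = 1 / ((m : ℝ) + 2) := by
      field_simp
      norm_num
    push_cast
    push_cast at ih
    rw [show ((m : ℝ) + 1 + 2) = (m : ℝ) + 3 from by ring,
      show ((m : ℝ) + 1 + 1) = (m : ℝ) + 2 from by ring]
    linarith [h2, h3, ih]

lemma log_bound {n : ℕ} (hn : 2 ≤ n) :
    (1 / 16 : ℝ) * Real.log n ≤ (1 / 4) * (Real.log (n + 1) - Real.log 2) := by
  have hn2 : (2 : ℝ) ≤ (n : ℝ) := by exact_mod_cast hn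
  have key : (16 : ℝ) * n ≤ ((n : ℝ) + 1) ^ 4 := by nlinarith [sq_nonneg ((n : ℝ) - 1), sq_nonneg ((n:ℝ)*(n-1))]
  have h1 : Real.log (16 * n) ≤ Real.log (((n : ℝ) + 1) ^ 4) :=
    Real.log_le_log (by positivity) key
  rw [Real.log_mul (by norm_num) (by positivity), Real.log_pow] at h1
  have h16 : Real.log 16 = 4 * Real.log 2 := by
    rw [show (16 : ℝ) = 2 ^ 4 by norm_num, Real.log_pow]; push_cast; ring
  rw [h16] at h1
  push_cast at h1 ⊢
  linarith

lemma bstep_of_pos {x : ℝ} (h : 0 < x) : bstep x = 1 := if_pos h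
lemma bstep_of_nonpos {x : ℝ} (h : x ≤ 0) : bstep x = 0 := if_neg (not_lt.mpr h)

lemma bstep_mem (x : ℝ) : 0 ≤ bstep x ∧ bstep x ≤ 1 := by
  unfold bstep; split <;> norm_num

lemma measurable_bstep : Measurable bstep := by
  unfold bstep
  refine Measurable.ite ?_ measurable_const measurable_const
  exact measurableSet_Ioi (a := (0:ℝ))

lemma Xmap_fix {n k : ℕ} {x : ℝ} (hk1 : 1 ≤ k) (hk2 : k ≤ n - 1)
    (hx1 : (k : ℝ) / n ≤ x) (hx2 : x ≤ (2 * k + 1) / (2 * n)) : Xmap n x = x := by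
  rw [Xmap_def, if_pos ⟨k, hk1, hk2, Or.inl ⟨hx1, hx2⟩⟩]

lemma Xmap_flip {n k : ℕ} {x : ℝ} (hn : 2 ≤ n) (hk1 : 1 ≤ k) (hk2 : k ≤ n - 1)
    (hx1 : (2 * (k : ℝ) + 1) / (2 * n) < x) (hx2 : x < ((k : ℝ) + 1) / n) :
    Xmap n x = -x := by
  have hn0 : (0 : ℝ) < n := by exact_mod_cast (by omega : 0 < n)
  have hxpos : 0 < x := lt_trans (by positivity) hx1
  have hc1 : ¬ cond1 n x := by
    rintro ⟨k', hk'1, hk'n, ⟨ha, hb⟩ | ⟨ha, hb⟩⟩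
    · have hkk' : (k : ℝ) < k' := by
        by_contra h
        push_neg at h
        have : (2 * (k' : ℝ) + 1) / (2 * n) ≤ (2 * (k : ℝ) + 1) / (2 * n) := by gcongr
        linarith
      have hkk'' : k + 1 ≤ k' := Nat.succ_le_of_lt (by exact_mod_cast hkk')
      have hcast : (k : ℝ) + 1 ≤ (k' : ℝ) := by exact_mod_cast hkk''
      have : ((k : ℝ) + 1) / n ≤ (k' : ℝ) / n := by gcongr
      linarith
    · have h1 : (0 : ℝ) < (k' : ℝ) / n := by
        have hx : (0 : ℝ) < (k' : ℝ) := by exact_mod_cast hk'1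
        positivity
      linarith
  have hc2 : cond2 n x := ⟨k, hk1, hk2, Or.inl ⟨hx1.le, hx2.le⟩⟩
  rw [Xmap_def, if_neg hc1, if_pos hc2]

/-- The integrand. -/
noncomputable def fI (n : ℕ) : ℝ → ℝ := fun x =>
  |bstep (Xmap n x) - bstep (Xmap n (x + 1 / (2 * n)))| /
    (1 / (2 * n) + |Xmap n x - Xmap n (x + 1 / (2 * n))|)

lemma measurable_Xmap' (n : ℕ) : Measurable (Xmap n) := measurable_Xmap n

lemma measurable_fI (n : ℕ) : Measurable (fI n) := by
  have hX := measurable_Xmap' n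
  have h1 : Measurable fun x : ℝ => bstep (Xmap n x) := measurable_bstep.comp hX
  have h2 : Measurable fun x : ℝ => Xmap n (x + 1 / (2 * n)) :=
    hX.comp (measurable_id.add_const _)
  have h3 : Measurable fun x : ℝ => bstep (Xmap n (x + 1 / (2 * n))) :=
    measurable_bstep.comp h2
  exact ((h1.sub h3).abs).div (measurable_const.add ((hX.sub h2).abs))

lemma fI_nonneg {n : ℕ} (hn : 2 ≤ n) (x : ℝ) : 0 ≤ fI n x := by
  have hn0 : (0 : ℝ) < n := by exact_mod_cast (by omega : 0 < n)
  exact div_nonneg (abs_nonneg _) (by positivity)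

lemma fI_le {n : ℕ} (hn : 2 ≤ n) (x : ℝ) : fI n x ≤ 2 * n := by
  have hn0 : (0 : ℝ) < n := by exact_mod_cast (by omega : 0 < n)
  have hnum : |bstep (Xmap n x) - bstep (Xmap n (x + 1 / (2 * n)))| ≤ 1 := by
    have b1 := bstep_mem (Xmap n x)
    have b2 := bstep_mem (Xmap n (x + 1 / (2 * n)))
    rw [abs_sub_le_iff]
    constructor <;> linarith [b1.1, b1.2, b2.1, b2.2]
  have hden : 1 / (2 * (n : ℝ)) ≤ 1 / (2 * n) + |Xmap n x - Xmap n (x + 1 / (2 * n))| := by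
    linarith [abs_nonneg (Xmap n x - Xmap n (x + 1 / (2 * n)))]
  calc fI n x ≤ 1 / (1 / (2 * (n : ℝ))) := by
        apply div_le_div₀ (by norm_num) hnum (by positivity) hden
    _ = 2 * n := by field_simp

lemma integrableOn_fI {n : ℕ} (hn : 2 ≤ n) {s : Set ℝ} (hs : s ⊆ Icc (-1 : ℝ) 1) :
    IntegrableOn (fI n) s := by
  refine IntegrableOn.mono_set ?_ hs
  refine Measure.integrableOn_of_bounded (M := 2 * n) measure_Icc_lt_top.ne
    (measurable_fI n).aestronglyMeasurable (ae_of_all _ fun x => ?_)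
  rw [Real.norm_eq_abs, abs_of_nonneg (fI_nonneg hn x)]
  exact fI_le hn x

lemma fI_lower {n k : ℕ} (hn : 2 ≤ n) (hk1 : 1 ≤ k) (hk2 : k ≤ n - 1) {x : ℝ}
    (hx : x ∈ Ioo ((k : ℝ) / n) ((2 * k + 1) / (2 * n))) :
    (n : ℝ) / (2 * k + 2) ≤ fI n x := by
  obtain ⟨hxl, hxr⟩ := hx
  have hn0 : (0 : ℝ) < n := by exact_mod_cast (by omega : 0 < n)
  have hk0 : (1 : ℝ) ≤ k := by exact_mod_cast hk1
  have hxpos : 0 < x := lt_of_lt_of_le (by positivity : (0:ℝ) < (k:ℝ)/n) hxl.le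
  have e1 : (k : ℝ) / n + 1 / (2 * n) = (2 * k + 1) / (2 * n) := by field_simp
  have e2 : (2 * (k : ℝ) + 1) / (2 * n) + 1 / (2 * n) = ((k : ℝ) + 1) / n := by
    field_simp; ring
  have h1 : Xmap n x = x := Xmap_fix hk1 hk2 hxl.le hxr.le
  have h2 : Xmap n (x + 1 / (2 * n)) = -(x + 1 / (2 * n)) :=
    Xmap_flip hn hk1 hk2 (by linarith) (by linarith)
  have hδ : (0 : ℝ) < 1 / (2 * n) := by positivity
  unfold fI
  rw [h1, h2, bstep_of_pos hxpos, bstep_of_nonpos (by linarith), abs_of_pos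
    (by linarith : (0:ℝ) < x - -(x + 1 / (2 * n)))]
  rw [show |(1 : ℝ) - 0| = 1 by norm_num]
  have hDle : 1 / (2 * (n:ℝ)) + (x - -(x + 1 / (2 * n))) ≤ (2 * (k : ℝ) + 2) / n := by
    have hxr' : x * (2 * (n:ℝ)) ≤ 2 * k + 1 := ((le_div_iff₀ (by positivity)).mp hxr.le)
    have key : (1 / (2 * (n:ℝ)) + (x - -(x + 1 / (2 * n)))) = 2 * x + 1 / (n:ℝ) := by
      field_simp; ring
    rw [key, le_div_iff₀ hn0]
    have key2 : (2 * x + 1 / (n:ℝ)) * n = 2 * (x * n) + 1 := by field_simp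
    rw [key2]
    nlinarith [hxr']
  have hDpos : 0 < 1 / (2 * (n:ℝ)) + (x - -(x + 1 / (2 * n))) := by
    have : (0:ℝ) < 1 / (2 * (n:ℝ)) := hδ
    linarith
  calc (n : ℝ) / (2 * k + 2) = 1 / ((2 * (k:ℝ) + 2) / n) := by
        rw [one_div_div]
    _ ≤ 1 / (1 / (2 * (n:ℝ)) + (x - -(x + 1 / (2 * n)))) :=
        one_div_le_one_div_of_le hDpos hDle
    _ = _ := rfl

lemma Ioo_subset {n k : ℕ} (hn : 2 ≤ n) (hk1 : 1 ≤ k) (hk2 : k ≤ n - 1) :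
    Ioo ((k : ℝ) / n) ((2 * k + 1) / (2 * n)) ⊆ Icc (-1 : ℝ) 1 := by
  have hn0 : (0 : ℝ) < n := by exact_mod_cast (by omega : 0 < n)
  have hkn : (k : ℝ) + 1 ≤ n := by exact_mod_cast (by omega : k + 1 ≤ n)
  intro x ⟨hx1, hx2⟩
  constructor
  · have : (0:ℝ) ≤ (k:ℝ)/n := by positivity
    linarith
  · have : (2 * (k:ℝ) + 1) / (2 * n) ≤ 1 := by
      rw [div_le_one (by positivity)]
      linarith
    linarith

lemma integral_piece {n k : ℕ} (hn : 2 ≤ n) (hk1 : 1 ≤ k) (hk2 : k ≤ n - 1) :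
    1 / (4 * ((k : ℝ) + 1)) ≤ ∫ x in Ioo ((k : ℝ) / n) ((2 * k + 1) / (2 * n)), fI n x := by
  have hn0 : (0 : ℝ) < n := by exact_mod_cast (by omega : 0 < n)
  have h := setIntegral_ge_of_const_le (μ := volume) measurableSet_Ioo
    measure_Ioo_lt_top.ne (fun x hx => fI_lower hn hk1 hk2 hx)
    (integrableOn_fI hn (Ioo_subset hn hk1 hk2))
  rw [Real.volume_real_Ioo_of_le (by linarith [show (k:ℝ)/n ≤ (2 * k + 1) / (2 * n) by rw [div_le_div_iff₀ (by positivity) (by positivity)]; nlinarith])] at h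
  have hlen : (2 * (k : ℝ) + 1) / (2 * n) - (k : ℝ) / n = 1 / (2 * n) := by
    field_simp; ring
  rw [hlen, smul_eq_mul, mul_comm] at h
  have heq : (n : ℝ) / (2 * k + 2) * (1 / (2 * n)) = 1 / (4 * ((k : ℝ) + 1)) := by
    field_simp; ring
  rw [heq] at h
  exact h

theorem main (n : ℕ) (hn : 2 ≤ n) :
    (1 / 16 : ℝ) * Real.log n ≤ ∫ x in Set.Icc (-1 : ℝ) 1, fI n x := by
  have hn0 : (0 : ℝ) < n := by exact_mod_cast (by omega : 0 < n)
  set s : ℕ → Set ℝ := fun k => Ioo ((k : ℝ) / n) ((2 * k + 1) / (2 * n)) with hs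
  set T : Finset ℕ := Finset.Icc 1 (n - 1) with hT
  have hmem : ∀ k ∈ T, 1 ≤ k ∧ k ≤ n - 1 := by
    intro k hk; rw [hT, Finset.mem_Icc] at hk; exact hk
  -- disjointness
  have hdisj : (↑T : Set ℕ).Pairwise (Function.onFun Disjoint s) := by
    have key : ∀ i j : ℕ, i < j → Disjoint (s i) (s j) := by
      intro i j hij
      rw [hs, Set.disjoint_left]
      rintro x ⟨hx1, hx2⟩ ⟨hy1, hy2⟩
      have hij' : (i : ℝ) + 1 ≤ j := by exact_mod_cast hij
      have h1 : (2 * (i:ℝ) + 1) / (2 * n) ≤ (j : ℝ) / n := by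
        rw [div_le_div_iff₀ (by positivity) hn0]
        nlinarith
      linarith
    intro i _ j _ hij
    rcases lt_or_gt_of_ne hij with h | h
    · exact key i j h
    · exact (key j i h).symm
  have hsub : (⋃ k ∈ T, s k) ⊆ Icc (-1 : ℝ) 1 := by
    refine Set.iUnion₂_subset fun k hk => ?_
    obtain ⟨h1, h2⟩ := hmem k hk
    exact Ioo_subset hn h1 h2
  have hint : ∀ k ∈ T, IntegrableOn (fI n) (s k) := by
    intro k hk
    obtain ⟨h1, h2⟩ := hmem k hk
    exact integrableOn_fI hn (Ioo_subset hn h1 h2)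
  have hunion : ∫ x in ⋃ k ∈ T, s k, fI n x = ∑ k ∈ T, ∫ x in s k, fI n x :=
    integral_biUnion_finset T (fun k _ => measurableSet_Ioo) hdisj hint
  have hmono : ∫ x in ⋃ k ∈ T, s k, fI n x ≤ ∫ x in Icc (-1 : ℝ) 1, fI n x :=
    setIntegral_mono_set (integrableOn_fI hn (le_refl _))
      (ae_of_all _ fun x => fI_nonneg hn x) (HasSubset.Subset.eventuallyLE hsub)
  have hsum1 : ∑ k ∈ T, 1 / (4 * ((k : ℝ) + 1)) ≤ ∑ k ∈ T, ∫ x in s k, fI n x := by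
    refine Finset.sum_le_sum fun k hk => ?_
    obtain ⟨h1, h2⟩ := hmem k hk
    exact integral_piece hn h1 h2
  have hsum2 : (1 / 4 : ℝ) * (Real.log (n + 1) - Real.log 2) ≤
      ∑ k ∈ T, 1 / (4 * ((k : ℝ) + 1)) := by
    have h := sum_log (n - 1)
    have hcast : ((n - 1 : ℕ) : ℝ) + 2 = (n : ℝ) + 1 := by
      have : ((n - 1 : ℕ) : ℝ) = (n : ℝ) - 1 := by
        rw [Nat.cast_sub (by omega)]; norm_num
      rw [this]; ring
    rw [hcast] at h
    have heq : ∑ k ∈ T, 1 / (4 * ((k : ℝ) + 1)) =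
        (1 / 4 : ℝ) * ∑ k ∈ T, 1 / ((k : ℝ) + 1) := by
      rw [Finset.mul_sum]
      refine Finset.sum_congr rfl fun k _ => ?_
      field_simp
    rw [heq, hT]
    linarith
  calc (1 / 16 : ℝ) * Real.log n
      ≤ (1 / 4) * (Real.log (n + 1) - Real.log 2) := log_bound hn
    _ ≤ ∑ k ∈ T, 1 / (4 * ((k : ℝ) + 1)) := hsum2
    _ ≤ ∑ k ∈ T, ∫ x in s k, fI n x := hsum1
    _ = ∫ x in ⋃ k ∈ T, s k, fI n x := hunion.symm
    _ ≤ _ := hmono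

end Stmt7Aux

/-- For `n ≥ 2` and `δ = 1/(2n)`, the map `Xmap n` preserves Lebesgue
measure and there exists a universal constant `c > 0`, independent of `n`, such that
`∫_{-1}^{1} |b(X(x)) - b(X(x+δ))| / (δ + |X(x) - X(x+δ)|) dx ≥ c log n`. -/
theorem stmt7 :
    ∃ c > (0 : ℝ), ∀ n : ℕ, 2 ≤ n →
      MeasurePreserving (Xmap n) volume volume ∧
      c * Real.log n ≤
        ∫ x in Set.Icc (-1 : ℝ) 1,
          |bstep (Xmap n x) - bstep (Xmap n (x + 1 / (2 * n)))| /
            (1 / (2 * n) + |Xmap n x - Xmap n (x + 1 / (2 * n))|) := by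
  refine ⟨1 / 16, by norm_num, fun n hn => ⟨Stmt7Aux.measurePreserving_Xmap n, ?_⟩⟩
  exact Stmt7Aux.main n hn
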